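/- Let π be a probability measure on ℝ with inf supp(π) < 0 < sup supp(π), and fix d > 0. Then the function u ↦ G(u,d) is differentiable on (m(π), M(π)) and its derivative satisfies ∂G/∂u(u,d) = h(u,d) for every u ∈ (m(π), M(π)). -/

import Mathlib

open MeasureTheory ProbabilityTheory Filter Set

/-- The (topological) support of a measure on `ℝ`: points all of whose neighborhoods
have positive measure. -/
def msupp (pr : MeasureTheory.Measure ℝ) : Set ℝ := {x : ℝ | ∀ U ∈ nhds x, pr U ≠ 0}

/-- The cumulant generating function `c(γ₁, γ₂) = log ∫ exp(γ₁ x - γ₂/2 x²) dπ(x)`. -/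
noncomputable def cgf (pr : MeasureTheory.Measure ℝ) (γ₁ γ₂ : ℝ) : ℝ :=
  Real.log (∫ x, Real.exp (γ₁ * x - γ₂ / 2 * x ^ 2) ∂pr)

/-- The exponentially tilted measure `π^{(γ₁, γ₂)}`, with density
`exp(γ₁ x - γ₂/2 x² - c(γ₁,γ₂))` with respect to `π`. -/
noncomputable def tilt (pr : MeasureTheory.Measure ℝ) (γ₁ γ₂ : ℝ) : MeasureTheory.Measure ℝ :=
  pr.withDensity fun x => ENNReal.ofReal (Real.exp (γ₁ * x - γ₂ / 2 * x ^ 2 - cgf pr γ₁ γ₂))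

/-- The mean of the tilted measure `π^{(γ₁, γ₂)}`. -/
noncomputable def tiltMean (pr : MeasureTheory.Measure ℝ) (γ₁ γ₂ : ℝ) : ℝ :=
  ∫ x, x ∂(tilt pr γ₁ γ₂)
namespace Stmt3Aux

noncomputable def P (pr : Measure ℝ) (d : ℝ) (k : ℕ) (γ : ℝ) : ℝ :=
  ∫ x, x ^ k * Real.exp (γ * x - d / 2 * x ^ 2) ∂pr

lemma bound1 {d : ℝ} (hd : 0 < d) (b x : ℝ) :
    b * |x| - d / 2 * x ^ 2 ≤ b ^ 2 / (2 * d) := by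
  have hx2 : x ^ 2 = |x| ^ 2 := (sq_abs x).symm
  rw [le_div_iff₀ (by positivity : (0:ℝ) < 2 * d), hx2]
  nlinarith [sq_nonneg (d * |x| - b), hd, abs_nonneg x]

lemma norm_le {d : ℝ} (hd : 0 < d) (γ x : ℝ) (k : ℕ) :
    ‖x ^ k * Real.exp (γ * x - d / 2 * x ^ 2)‖ ≤ Real.exp ((|γ| + k) ^ 2 / (2 * d)) := by
  rw [norm_mul, norm_pow, Real.norm_eq_abs, Real.norm_eq_abs, Real.abs_exp]
  have h1 : |x| ^ k ≤ Real.exp (k * |x|) := by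
    calc |x| ^ k ≤ Real.exp |x| ^ k :=
          pow_le_pow_left₀ (abs_nonneg x) (by linarith [Real.add_one_le_exp |x|]) k
      _ = Real.exp (k * |x|) := by rw [← Real.exp_nat_mul]
  calc |x| ^ k * Real.exp (γ * x - d / 2 * x ^ 2)
      ≤ Real.exp (k * |x|) * Real.exp (γ * x - d / 2 * x ^ 2) :=
        mul_le_mul_of_nonneg_right h1 (Real.exp_pos _).le
    _ = Real.exp (k * |x| + (γ * x - d / 2 * x ^ 2)) := by rw [← Real.exp_add]
    _ ≤ Real.exp ((|γ| + k) ^ 2 / (2 * d)) := by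
        apply Real.exp_le_exp.2
        have h2 : γ * x ≤ |γ| * |x| := le_trans (le_abs_self _) (by rw [abs_mul])
        have := bound1 hd (|γ| + k) x
        nlinarith [abs_nonneg x]

lemma contP (d γ : ℝ) (k : ℕ) :
    Continuous fun x : ℝ => x ^ k * Real.exp (γ * x - d / 2 * x ^ 2) := by
  fun_prop

lemma intgP (pr : Measure ℝ) [IsProbabilityMeasure pr] {d : ℝ} (hd : 0 < d) (γ : ℝ) (k : ℕ) :
    Integrable (fun x => x ^ k * Real.exp (γ * x - d / 2 * x ^ 2)) pr :=
  (integrable_const (Real.exp ((|γ| + k) ^ 2 / (2 * d)))).mono'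
    (contP d γ k).aestronglyMeasurable (ae_of_all _ fun x => norm_le hd γ x k)

lemma P0_eq (pr : Measure ℝ) (d γ : ℝ) :
    P pr d 0 γ = ∫ x, Real.exp (γ * x - d / 2 * x ^ 2) ∂pr := by
  simp [P]

lemma P0_pos (pr : Measure ℝ) [IsProbabilityMeasure pr] {d : ℝ} (hd : 0 < d) (γ : ℝ) :
    0 < P pr d 0 γ := by
  rw [P0_eq]
  exact integral_exp_pos (by simpa using intgP pr hd γ 0)

lemma hasDerivP (pr : Measure ℝ) [IsProbabilityMeasure pr] {d : ℝ} (hd : 0 < d) (k : ℕ) (γ : ℝ) :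
    HasDerivAt (P pr d k) (P pr d (k + 1) γ) γ := by
  have key := hasDerivAt_integral_of_dominated_loc_of_deriv_le (μ := pr)
    (F := fun γ x => x ^ k * Real.exp (γ * x - d / 2 * x ^ 2))
    (F' := fun γ x => x ^ (k + 1) * Real.exp (γ * x - d / 2 * x ^ 2))
    (bound := fun _ => Real.exp ((|γ| + 1 + (k + 1)) ^ 2 / (2 * d)))
    (x₀ := γ) (Metric.ball_mem_nhds γ one_pos)
    (Eventually.of_forall fun γ' => (contP d γ' k).aestronglyMeasurable)
    (intgP pr hd γ k)
    (contP d γ (k + 1)).aestronglyMeasurable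
    ?_ (integrable_const _) ?_
  · exact key.2
  · refine ae_of_all _ fun x γ' hγ' => ?_
    refine (norm_le hd γ' x (k + 1)).trans (Real.exp_le_exp.2 ?_)
    have h1 : |γ'| ≤ |γ| + 1 := by
      have := mem_ball_iff_norm.1 hγ'
      rw [Real.norm_eq_abs] at this
      calc |γ'| = |γ + (γ' - γ)| := by ring_nf
        _ ≤ |γ| + |γ' - γ| := abs_add_le _ _
        _ ≤ |γ| + 1 := by linarith
    have hc : (0:ℝ) ≤ (↑(k + 1) : ℝ) := by positivity
    have hsq : (|γ'| + (↑(k + 1) : ℝ)) ^ 2 ≤ (|γ| + 1 + (↑(k + 1) : ℝ)) ^ 2 := by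
      nlinarith [abs_nonneg γ', abs_nonneg γ, hc, h1]
    have hgoal := (div_le_div_iff_of_pos_right (c := 2 * d) (by positivity)).2 hsq
    convert hgoal using 3
    rfl
    push_cast
    ring
  · refine ae_of_all _ fun x γ' _ => ?_
    have h1 : HasDerivAt (fun γ' : ℝ => γ' * x - d / 2 * x ^ 2) x γ' :=
      (hasDerivAt_mul_const x).sub_const _
    have h2 := (h1.exp).const_mul (x ^ k)
    convert h2 using 1
    rfl
    ring

lemma cgf_eq (pr : Measure ℝ) (d γ : ℝ) : cgf pr γ d = Real.log (P pr d 0 γ) := by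
  rw [P0_eq]; rfl

lemma hasDerivC (pr : Measure ℝ) [IsProbabilityMeasure pr] {d : ℝ} (hd : 0 < d) (γ : ℝ) :
    HasDerivAt (fun γ => cgf pr γ d) (P pr d 1 γ / P pr d 0 γ) γ := by
  simp only [cgf_eq]
  exact (hasDerivP pr hd 0 γ).log (P0_pos pr hd γ).ne'

/-- `cD` is the derivative of the cgf in the first variable. -/
noncomputable def cD (pr : Measure ℝ) (d γ : ℝ) : ℝ := P pr d 1 γ / P pr d 0 γ

lemma tiltMean_eq (pr : Measure ℝ) [IsProbabilityMeasure pr] {d : ℝ} (hd : 0 < d) (γ : ℝ) :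
    tiltMean pr γ d = cD pr d γ := by
  have hF : 0 < P pr d 0 γ := P0_pos pr hd γ
  have hmeas : Measurable fun x : ℝ =>
      (Real.exp (γ * x - d / 2 * x ^ 2 - cgf pr γ d)).toNNReal := by
    fun_prop
  have : tiltMean pr γ d
      = ∫ x, (Real.exp (γ * x - d / 2 * x ^ 2 - cgf pr γ d)).toNNReal • x ∂pr := by
    rw [tiltMean, tilt]
    exact integral_withDensity_eq_integral_smul hmeas _
  rw [this]
  have heq : ∀ x : ℝ, (Real.exp (γ * x - d / 2 * x ^ 2 - cgf pr γ d)).toNNReal • x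
      = (P pr d 0 γ)⁻¹ * (x * Real.exp (γ * x - d / 2 * x ^ 2)) := by
    intro x
    rw [NNReal.smul_def, smul_eq_mul, Real.coe_toNNReal _ (Real.exp_pos _).le]
    rw [cgf_eq, Real.exp_sub, Real.exp_log hF]
    field_simp
  rw [integral_congr_ae (ae_of_all _ fun x => heq x), integral_const_mul,
    inv_mul_eq_div, cD]
  congr 1
  rw [P]
  exact integral_congr_ae (ae_of_all _ fun x => by simp)

lemma variance_pos (pr : Measure ℝ) [IsProbabilityMeasure pr]
    (hneg : ∃ x ∈ msupp pr, x < 0) (hpos : ∃ x ∈ msupp pr, 0 < x)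
    {d : ℝ} (hd : 0 < d) (γ : ℝ) :
    0 < P pr d 2 γ * P pr d 0 γ - P pr d 1 γ * P pr d 1 γ := by
  set m : ℝ := P pr d 1 γ / P pr d 0 γ with hm
  have hF : 0 < P pr d 0 γ := P0_pos pr hd γ
  set f : ℝ → ℝ := fun x => (x - m) ^ 2 * Real.exp (γ * x - d / 2 * x ^ 2) with hf
  have hfnn : 0 ≤ f := fun x => mul_nonneg (sq_nonneg _) (Real.exp_pos _).le
  have hfeq : f = fun x => x ^ 2 * Real.exp (γ * x - d / 2 * x ^ 2)
      - 2 * m * (x ^ 1 * Real.exp (γ * x - d / 2 * x ^ 2))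
      + m ^ 2 * (x ^ 0 * Real.exp (γ * x - d / 2 * x ^ 2)) := by
    funext x; simp only [pow_one, pow_zero, one_mul]; ring
  have hint : Integrable f pr := by
    rw [hfeq]
    exact (((intgP pr hd γ 2).sub ((intgP pr hd γ 1).const_mul _)).add
      ((intgP pr hd γ 0).const_mul _))
  have e2 := intgP pr hd γ 2
  have e1 : Integrable (fun x => 2 * m * (x ^ 1 * Real.exp (γ * x - d / 2 * x ^ 2))) pr :=
    (intgP pr hd γ 1).const_mul _
  have e0 : Integrable (fun x => m ^ 2 * (x ^ 0 * Real.exp (γ * x - d / 2 * x ^ 2))) pr :=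
    (intgP pr hd γ 0).const_mul _
  have e21 : Integrable (fun x => x ^ 2 * Real.exp (γ * x - d / 2 * x ^ 2)
      - 2 * m * (x ^ 1 * Real.exp (γ * x - d / 2 * x ^ 2))) pr := e2.sub e1
  have hI : ∫ x, f x ∂pr = P pr d 2 γ - 2 * m * P pr d 1 γ + m ^ 2 * P pr d 0 γ := by
    rw [hfeq, integral_add e21 e0, integral_sub e2 e1, integral_const_mul, integral_const_mul]
    rfl
  have hIpos : 0 < ∫ x, f x ∂pr := by
    rcases (integral_nonneg hfnn).lt_or_eq with h | h
    · exact h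
    · exfalso
      have hae : f =ᵐ[pr] 0 := (integral_eq_zero_iff_of_nonneg hfnn hint).1 h.symm
      have hae2 : ∀ᵐ x ∂pr, x = m := by
        filter_upwards [hae] with x hx
        simp only [hf, Pi.zero_apply] at hx
        have hexp := (Real.exp_pos (γ * x - d / 2 * x ^ 2)).ne'
        have h2 : (x - m) ^ 2 = 0 := by
          rcases mul_eq_zero.1 hx with h' | h'
          · exact h'
          · exact absurd h' hexp
        have h3 : x - m = 0 := by
          nlinarith [sq_nonneg (x - m), h2]
        linarith
      have hnull : pr {m}ᶜ = 0 := by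
        have hset : {x : ℝ | ¬ x = m} = ({m}ᶜ : Set ℝ) := by
          ext x; simp
        rw [← hset]
        exact ae_iff.1 hae2
      obtain ⟨x₀, hx₀s, hx₀⟩ := hneg
      obtain ⟨x₁, hx₁s, hx₁⟩ := hpos
      by_cases hmx : m = x₀
      · have hne : x₁ ≠ m := by intro hc; rw [hc, hmx] at hx₁; linarith
        exact hx₁s {m}ᶜ (isOpen_compl_singleton.mem_nhds hne) hnull
      · exact hx₀s {m}ᶜ (isOpen_compl_singleton.mem_nhds (Ne.symm hmx)) hnull
  have : P pr d 2 γ * P pr d 0 γ - P pr d 1 γ * P pr d 1 γ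
      = (∫ x, f x ∂pr) * P pr d 0 γ := by
    rw [hI, hm]; field_simp; ring
  rw [this]
  exact mul_pos hIpos hF

lemma cD_strictMono (pr : Measure ℝ) [IsProbabilityMeasure pr]
    (hneg : ∃ x ∈ msupp pr, x < 0) (hpos : ∃ x ∈ msupp pr, 0 < x)
    {d : ℝ} (hd : 0 < d) : StrictMono (cD pr d) := by
  apply strictMono_of_deriv_pos
  intro γ
  have hder : HasDerivAt (cD pr d)
      ((P pr d 2 γ * P pr d 0 γ - P pr d 1 γ * P pr d 1 γ) / (P pr d 0 γ) ^ 2) γ := by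
    have := (hasDerivP pr hd 1 γ).div (hasDerivP pr hd 0 γ) (P0_pos pr hd γ).ne'
    exact this
  rw [hder.deriv]
  exact div_pos (variance_pos pr hneg hpos hd γ) (pow_pos (P0_pos pr hd γ) 2)

lemma tangent (pr : Measure ℝ) [IsProbabilityMeasure pr]
    (hneg : ∃ x ∈ msupp pr, x < 0) (hpos : ∃ x ∈ msupp pr, 0 < x)
    {d : ℝ} (hd : 0 < d) (β γ : ℝ) :
    cgf pr β d + cD pr d β * (γ - β) ≤ cgf pr γ d := by
  have hmono := cD_strictMono pr hneg hpos hd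
  have hcont : ContinuousOn (fun γ => cgf pr γ d) (Icc (min β γ) (max β γ)) :=
    Continuous.continuousOn (continuous_iff_continuousAt.2 fun x =>
      (hasDerivC pr hd x).continuousAt)
  rcases lt_trichotomy β γ with hlt | heq | hgt
  · obtain ⟨ξ, hξ, hslope⟩ := exists_hasDerivAt_eq_slope (fun γ => cgf pr γ d) (cD pr d) hlt
      (by simpa [min_eq_left hlt.le, max_eq_right hlt.le] using hcont)
      (fun x _ => hasDerivC pr hd x)
    have h1 : cD pr d β ≤ cD pr d ξ := (hmono hξ.1).le
    rw [eq_div_iff (by linarith : γ - β ≠ 0)] at hslope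
    nlinarith [hξ.1, hξ.2]
  · simp [heq]
  · obtain ⟨ξ, hξ, hslope⟩ := exists_hasDerivAt_eq_slope (fun γ => cgf pr γ d) (cD pr d) hgt
      (by simpa [min_eq_right hgt.le, max_eq_left hgt.le] using hcont)
      (fun x _ => hasDerivC pr hd x)
    have h1 : cD pr d ξ ≤ cD pr d β := (hmono hξ.2).le
    rw [eq_div_iff (by linarith : β - γ ≠ 0)] at hslope
    nlinarith [hξ.1, hξ.2]

end Stmt3Aux

/-- with `h(·,d)` the (unique) tilt parameter matching a prescribed mean,
the function `u ↦ G(u,d) = u·h(u,d) − c(h(u,d),d) + c(0,d)` is differentiable on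
`(m(π), M(π))` with derivative `h(u,d)`. -/
theorem stmt3 (pr : Measure ℝ) [IsProbabilityMeasure pr]
    (hneg : ∃ x ∈ msupp pr, x < 0) (hpos : ∃ x ∈ msupp pr, 0 < x)
    (d : ℝ) (hd : 0 < d) (h : ℝ → ℝ)
    (hh : ∀ u : ℝ, (∃ x ∈ msupp pr, x < u) → (∃ x ∈ msupp pr, u < x) →
      tiltMean pr (h u) d = u)
    (u : ℝ) (hul : ∃ x ∈ msupp pr, x < u) (huu : ∃ x ∈ msupp pr, u < x) :
    HasDerivAt (fun v => v * h v - cgf pr (h v) d + cgf pr 0 d) (h u) u := by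
  obtain ⟨x₀, hx₀s, hx₀⟩ := hul
  obtain ⟨x₁, hx₁s, hx₁⟩ := huu
  have hmono := Stmt3Aux.cD_strictMono pr hneg hpos hd
  have hvalid : ∀ w : ℝ, x₀ < w → w < x₁ → Stmt3Aux.cD pr d (h w) = w := by
    intro w hw1 hw2
    rw [← Stmt3Aux.tiltMean_eq pr hd]
    exact hh w ⟨x₀, hx₀s, hw1⟩ ⟨x₁, hx₁s, hw2⟩
  have hu_eq : Stmt3Aux.cD pr d (h u) = u := hvalid u hx₀ hx₁
  have sandwich : ∀ v w : ℝ, Stmt3Aux.cD pr d (h v) = v → Stmt3Aux.cD pr d (h w) = w →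
      (w - v) * h v ≤ (w * h w - cgf pr (h w) d) - (v * h v - cgf pr (h v) d) := by
    intro v w hv hw
    have := Stmt3Aux.tangent pr hneg hpos hd (h w) (h v)
    rw [hw] at this
    nlinarith [this]
  rw [hasDerivAt_iff_isLittleO, Asymptotics.isLittleO_iff]
  intro ε hε
  have h1 : Stmt3Aux.cD pr d (h u - ε) < u := by
    have := hmono (show h u - ε < h u by linarith)
    rwa [hu_eq] at this
  have h2 : u < Stmt3Aux.cD pr d (h u + ε) := by
    have := hmono (show h u < h u + ε by linarith)
    rwa [hu_eq] at this
  set a : ℝ := Stmt3Aux.cD pr d (h u - ε) with ha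
  set b : ℝ := Stmt3Aux.cD pr d (h u + ε) with hb
  set δ : ℝ := min (min (u - x₀) (x₁ - u)) (min (u - a) (b - u)) with hδdef
  have hδ : 0 < δ := by
    simp only [hδdef, lt_min_iff]
    exact ⟨⟨by linarith, by linarith⟩, by linarith, by linarith⟩
  filter_upwards [Metric.ball_mem_nhds u hδ] with w hw
  rw [Metric.mem_ball, Real.dist_eq] at hw
  obtain ⟨hwl, hwr⟩ := abs_lt.1 hw
  have hδ1 : δ ≤ u - x₀ := le_trans (min_le_left _ _) (min_le_left _ _)
  have hδ2 : δ ≤ x₁ - u := le_trans (min_le_left _ _) (min_le_right _ _)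
  have hδ3 : δ ≤ u - a := le_trans (min_le_right _ _) (min_le_left _ _)
  have hδ4 : δ ≤ b - u := le_trans (min_le_right _ _) (min_le_right _ _)
  have hwv : Stmt3Aux.cD pr d (h w) = w := hvalid w (by linarith) (by linarith)
  have hb1 : h u - ε < h w := by
    have : Stmt3Aux.cD pr d (h u - ε) < Stmt3Aux.cD pr d (h w) := by
      rw [hwv]; linarith
    exact hmono.lt_iff_lt.1 this
  have hb2 : h w < h u + ε := by
    have : Stmt3Aux.cD pr d (h w) < Stmt3Aux.cD pr d (h u + ε) := by
      rw [hwv]; linarith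
    exact hmono.lt_iff_lt.1 this
  have s1 := sandwich u w hu_eq hwv
  have s2 := sandwich w u hwv hu_eq
  rw [Real.norm_eq_abs, Real.norm_eq_abs, smul_eq_mul]
  rw [abs_le]
  have hkey : (w - u) * (h w - h u) ≤ ε * |w - u| := by
    calc (w - u) * (h w - h u) ≤ |(w - u) * (h w - h u)| := le_abs_self _
      _ = |w - u| * |h w - h u| := abs_mul _ _
      _ ≤ |w - u| * ε :=
          mul_le_mul_of_nonneg_left (abs_le.2 ⟨by linarith, by linarith⟩) (abs_nonneg _)
      _ = ε * |w - u| := mul_comm _ _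
  constructor
  · have : (0:ℝ) ≤ ε * |w - u| := by positivity
    nlinarith [s1]
  · nlinarith [s2, hkey]
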